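/- arXiv:1007.3339 — 6 statements merged into one kernel-verified Lean document; each statement's English description precedes it below -/
import Mathlib

section
/- Let Γ be a strongly regular graph with μ = 1, so that there exist positive integers r and s such that the local graph of each vertex is the disjoint union of r copies of an s-clique (so Γ has v = 1 + rs + s²r(r−1) vertices, degree k = rs, and λ = s − 1). Then s + 1 ≤ r. -/
/-- Lemma 2.1: if `Γ` is a (noncomplete) strongly regular graph with `μ = 1`,
so that the local graph of each vertex is a disjoint union of `r` copies of an
`s`-clique (whence `v = 1 + rs + s²r(r-1)`, `k = rs`, `λ = s - 1`),
then `s + 1 ≤ r`. -/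
theorem stmt_0 {V : Type*} [Fintype V] [DecidableEq V]
    (G : SimpleGraph V) [DecidableRel G.Adj]
    (v k l r s : ℕ) (hr : 0 < r) (hs : 0 < s)
    (hsrg : G.IsSRGWith v k l 1)
    (hnc : ∃ u w : V, u ≠ w ∧ ¬G.Adj u w)
    (hv : v = 1 + r * s + s ^ 2 * r * (r - 1)) (hk : k = r * s) (hl : l = s - 1)
    (hlocal : ∀ x : V, ∃ f : V → Fin r,
      (∀ y ∈ G.neighborFinset x, ∀ z ∈ G.neighborFinset x,
        (G.Adj y z ↔ (f y = f z ∧ y ≠ z))) ∧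
      ∀ i : Fin r, ((G.neighborFinset x).filter (fun y => f y = i)).card = s) :
    s + 1 ≤ r := by
  classical
  obtain ⟨u0, w0, huw, hnadj⟩ := hnc
  have hreg := hsrg.regular
  have hmem : ∀ a b : V, b ∈ G.neighborFinset a ↔ G.Adj a b := fun a b =>
    G.mem_neighborFinset a b
  have hcardV : Fintype.card V = v := hsrg.card
  -- common neighbours as a Finset
  have hT : ∀ a b : V, ((G.neighborFinset a) ∩ (G.neighborFinset b)).card
      = Fintype.card (G.commonNeighbors a b) := by
    intro a b
    rw [← Set.toFinset_card]
    congr 1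
    ext z
    rw [Set.mem_toFinset]
    simp [SimpleGraph.commonNeighbors]
  -- r ≥ 2
  have hr2 : 2 ≤ r := by
    by_contra hcon
    have hr1 : r = 1 := by omega
    have hsub : G.neighborFinset u0 ⊆ (Finset.univ.erase w0).erase u0 := by
      intro z hz
      rw [SimpleGraph.mem_neighborFinset] at hz
      refine Finset.mem_erase.mpr ⟨fun h => ?_, Finset.mem_erase.mpr ⟨fun h => ?_, Finset.mem_univ z⟩⟩
      · exact G.loopless.irrefl u0 (h ▸ hz)
      · exact hnadj (h ▸ hz)
    have h1 := Finset.card_le_card hsub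
    have hdeg : (G.neighborFinset u0).card = k := hreg u0
    rw [hdeg] at h1
    have h2b : u0 ∈ Finset.univ.erase w0 := Finset.mem_erase.mpr ⟨huw, Finset.mem_univ u0⟩
    rw [Finset.card_erase_of_mem h2b, Finset.card_erase_of_mem (Finset.mem_univ w0),
      Finset.card_univ, hcardV] at h1
    have hv' : v = 1 + s := by rw [hv, hr1]; ring
    have hk' : k = s := by rw [hk, hr1]; ring
    omega
  -- build the clique L
  obtain ⟨f, hf1, hf2⟩ := hlocal u0
  set C : Finset V := (G.neighborFinset u0).filter (fun y => f y = ⟨0, hr⟩) with hC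
  have hCsub : C ⊆ G.neighborFinset u0 := Finset.filter_subset _ _
  have hCcard : C.card = s := hf2 ⟨0, hr⟩
  have hxC : u0 ∉ C := fun h => G.notMem_neighborFinset_self u0 (hCsub h)
  set L : Finset V := insert u0 C with hL
  have hLcard : L.card = s + 1 := by
    rw [hL, Finset.card_insert_of_notMem hxC, hCcard]
  have hLadj : ∀ a ∈ L, ∀ b ∈ L, a ≠ b → G.Adj a b := by
    intro a ha b hb hab
    rcases Finset.mem_insert.mp ha with rfl | haC
    · rcases Finset.mem_insert.mp hb with rfl | hbC
      · exact absurd rfl hab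
      · exact (hmem _ _).mp (hCsub hbC)
    · rcases Finset.mem_insert.mp hb with rfl | hbC
      · exact ((hmem _ _).mp (hCsub haC)).symm
      · refine (hf1 a (hCsub haC) b (hCsub hbC)).mpr ⟨?_, hab⟩
        have h1 := (Finset.mem_filter.mp haC).2
        have h2 := (Finset.mem_filter.mp hbC).2
        rw [h1, h2]
  -- any vertex outside L has at most one neighbour in L
  have hone : ∀ z, z ∉ L → ∀ a ∈ L, ∀ b ∈ L, G.Adj z a → G.Adj z b → a = b := by
    intro z hz a ha b hb hza hzb
    by_contra hab
    have hadjab : G.Adj a b := hLadj a ha b hb hab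
    have hcomm : ((G.neighborFinset a) ∩ (G.neighborFinset b)).card = l := by
      rw [hT]; exact hsrg.of_adj a b hadjab
    set S : Finset V := (L.erase a).erase b with hS
    have hScard : S.card = s - 1 := by
      rw [hS, Finset.card_erase_of_mem (Finset.mem_erase.mpr ⟨Ne.symm hab, hb⟩),
        Finset.card_erase_of_mem ha, hLcard]
      omega
    have hzS : z ∉ S := fun h => hz (Finset.mem_of_mem_erase (Finset.mem_of_mem_erase h))
    have hsub : insert z S ⊆ (G.neighborFinset a) ∩ (G.neighborFinset b) := by
      intro w hw
      rcases Finset.mem_insert.mp hw with rfl | hwS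
      · exact Finset.mem_inter.mpr ⟨(hmem _ _).mpr hza.symm,
          (hmem _ _).mpr hzb.symm⟩
      · obtain ⟨hwb, hwa, hwL⟩ : w ≠ b ∧ w ≠ a ∧ w ∈ L := by
          have h1 := Finset.mem_erase.mp hwS
          have h2 := Finset.mem_erase.mp h1.2
          exact ⟨h1.1, h2.1, h2.2⟩
        exact Finset.mem_inter.mpr ⟨(hmem _ _).mpr (hLadj a ha w hwL (Ne.symm hwa)),
          (hmem _ _).mpr (hLadj b hb w hwL (Ne.symm hwb))⟩
    have hcard := Finset.card_le_card hsub
    rw [Finset.card_insert_of_notMem hzS, hScard, hcomm, hl] at hcard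
    omega
  -- each vertex of L has exactly s neighbours inside L
  have hNi : ∀ a ∈ L, (G.neighborFinset a ∩ L) = L.erase a := by
    intro a ha
    ext w
    simp only [Finset.mem_inter, Finset.mem_erase, SimpleGraph.mem_neighborFinset]
    constructor
    · rintro ⟨hadj, hwL⟩
      exact ⟨fun h => G.loopless.irrefl a (h ▸ hadj), hwL⟩
    · rintro ⟨hwa, hwL⟩
      exact ⟨hLadj a ha w hwL (Ne.symm hwa), hwL⟩
  -- there exists a vertex with no neighbour in L
  have hpex : ∃ p : V, p ∉ L ∧ ∀ a ∈ L, ¬G.Adj p a := by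
    by_contra hno
    push_neg at hno
    have hcover : (Finset.univ : Finset V) ⊆ L ∪ L.biUnion (fun a => G.neighborFinset a \ L) := by
      intro z _
      by_cases hz : z ∈ L
      · exact Finset.mem_union_left _ hz
      · obtain ⟨a, haL, hadj⟩ := hno z hz
        exact Finset.mem_union_right _ (Finset.mem_biUnion.mpr ⟨a, haL,
          Finset.mem_sdiff.mpr ⟨(hmem _ _).mpr hadj.symm, hz⟩⟩)
    have hdisj : ∀ a ∈ L, ∀ b ∈ L, a ≠ b →
        Disjoint (G.neighborFinset a \ L) (G.neighborFinset b \ L) := by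
      intro a ha b hb hab
      rw [Finset.disjoint_left]
      intro z hza hzb
      have h1 := Finset.mem_sdiff.mp hza
      have h2 := Finset.mem_sdiff.mp hzb
      exact hab (hone z h1.2 a ha b hb ((hmem _ _).mp h1.1).symm
        ((hmem _ _).mp h2.1).symm)
    have hcardeach : ∀ a ∈ L, (G.neighborFinset a \ L).card = k - s := by
      intro a ha
      have h1 : (G.neighborFinset a \ L).card + (G.neighborFinset a ∩ L).card
          = (G.neighborFinset a).card := Finset.card_sdiff_add_card_inter _ _
      rw [hNi a ha, Finset.card_erase_of_mem ha, hLcard] at h1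
      have hdeg : (G.neighborFinset a).card = k := hreg a
      omega
    have hcardB : (L.biUnion (fun a => G.neighborFinset a \ L)).card = (s + 1) * (k - s) := by
      rw [Finset.card_biUnion hdisj]
      rw [Finset.sum_congr rfl hcardeach, Finset.sum_const, hLcard, smul_eq_mul]
    have hle : v ≤ (s + 1) + (s + 1) * (k - s) := by
      calc v = (Finset.univ : Finset V).card := by rw [Finset.card_univ, hcardV]
        _ ≤ (L ∪ L.biUnion (fun a => G.neighborFinset a \ L)).card := Finset.card_le_card hcover
        _ ≤ L.card + (L.biUnion (fun a => G.neighborFinset a \ L)).card := Finset.card_union_le _ _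
        _ = (s + 1) + (s + 1) * (k - s) := by rw [hLcard, hcardB]
    obtain ⟨t, rfl⟩ : ∃ t, r = 2 + t := ⟨r - 2, by omega⟩
    have hks : k - s = (1 + t) * s := by
      rw [hk]
      have : (2 + t) * s = (1 + t) * s + s := by ring
      rw [this, Nat.add_sub_cancel]
    have hr1' : 2 + t - 1 = 1 + t := by omega
    rw [hks, hv, hr1'] at hle
    have hid : s + 1 + (s + 1) * ((1 + t) * s) + s * s * (1 + t) * (1 + t)
        = 1 + (2 + t) * s + s ^ 2 * (2 + t) * (1 + t) := by ring
    have hpos : 0 < s * s * (1 + t) * (1 + t) := by positivity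
    linarith [hle, hid, hpos]
  obtain ⟨p, hpL, hpn⟩ := hpex
  -- the unique common neighbour of p and each q ∈ L
  have hcex : ∀ q : V, ∃ e : V, q ∈ L → (G.neighborFinset p ∩ G.neighborFinset q) = {e} := by
    intro q
    by_cases hq : q ∈ L
    · have hpq : p ≠ q := fun h => hpL (h ▸ hq)
      have h1 : ((G.neighborFinset p) ∩ (G.neighborFinset q)).card = 1 := by
        rw [hT]; exact hsrg.of_not_adj hpq (hpn q hq)
      obtain ⟨e, he⟩ := Finset.card_eq_one.mp h1
      exact ⟨e, fun _ => he⟩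
    · exact ⟨p, fun h => absurd h hq⟩
  choose c hc using hcex
  have hcadjp : ∀ q ∈ L, G.Adj p (c q) := by
    intro q hq
    have : c q ∈ G.neighborFinset p ∩ G.neighborFinset q := by
      rw [hc q hq]; exact Finset.mem_singleton_self _
    exact (hmem _ _).mp (Finset.mem_inter.mp this).1
  have hcadjq : ∀ q ∈ L, G.Adj q (c q) := by
    intro q hq
    have : c q ∈ G.neighborFinset p ∩ G.neighborFinset q := by
      rw [hc q hq]; exact Finset.mem_singleton_self _
    exact (hmem _ _).mp (Finset.mem_inter.mp this).2
  have huniq : ∀ q ∈ L, ∀ z, G.Adj p z → G.Adj q z → z = c q := by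
    intro q hq z h1 h2
    have : z ∈ G.neighborFinset p ∩ G.neighborFinset q :=
      Finset.mem_inter.mpr ⟨(hmem _ _).mpr h1,
        (hmem _ _).mpr h2⟩
    rw [hc q hq] at this
    exact Finset.mem_singleton.mp this
  have hcnotL : ∀ q ∈ L, c q ∉ L := by
    intro q hq h
    exact hpn (c q) h (hcadjp q hq)
  -- the local partition at p
  obtain ⟨fp, hfp1, _⟩ := hlocal p
  have hinj : Set.InjOn (fun q => fp (c q)) L := by
    intro q hq q' hq' heq
    by_contra hne
    by_cases hcc : c q = c q'
    · exact hne (hone (c q) (hcnotL q hq) q hq q' hq' (hcadjq q hq).symm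
        (hcc ▸ (hcadjq q' hq').symm))
    · have hccadj : G.Adj (c q) (c q') :=
        (hfp1 (c q) ((hmem _ _).mpr (hcadjp q hq))
          (c q') ((hmem _ _).mpr (hcadjp q' hq'))).mpr ⟨heq, hcc⟩
      -- q is not adjacent to c q'
      have hqc' : ¬G.Adj q (c q') := by
        intro h
        exact hcc ((huniq q hq (c q') (hcadjp q' hq') h).symm)
      have hqne : q ≠ c q' := fun h => hpn q hq (h ▸ (hcadjp q' hq'))
      -- but q and c q' have two common neighbours: q' and c q
      have h1 : ((G.neighborFinset q) ∩ (G.neighborFinset (c q'))).card = 1 := by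
        rw [hT]; exact hsrg.of_not_adj hqne hqc'
      have hq'mem : q' ∈ (G.neighborFinset q) ∩ (G.neighborFinset (c q')) :=
        Finset.mem_inter.mpr ⟨(hmem _ _).mpr (hLadj q hq q' hq' hne),
          (hmem _ _).mpr (hcadjq q' hq').symm⟩
      have hcqmem : c q ∈ (G.neighborFinset q) ∩ (G.neighborFinset (c q')) :=
        Finset.mem_inter.mpr ⟨(hmem _ _).mpr (hcadjq q hq),
          (hmem _ _).mpr hccadj.symm⟩
      have hq'cq : q' ≠ c q := fun h => hcnotL q hq (h ▸ hq')
      have hsub : ({q', c q} : Finset V) ⊆ (G.neighborFinset q) ∩ (G.neighborFinset (c q')) := by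
        intro w hw
        rcases Finset.mem_insert.mp hw with rfl | hw
        · exact hq'mem
        · exact Finset.mem_singleton.mp hw ▸ hcqmem
      have hcard2 : ({q', c q} : Finset V).card = 2 := Finset.card_pair hq'cq
      have := Finset.card_le_card hsub
      rw [hcard2, h1] at this
      omega
  have hfinal : L.card ≤ Fintype.card (Fin r) := by
    rw [← Finset.card_univ]
    exact Finset.card_le_card_of_injOn (fun q => fp (c q)) (fun a _ => Finset.mem_univ _) hinj
  rw [hLcard, Fintype.card_fin] at hfinal
  exact hfinal
end

section
/- Let Γ be an amply regular graph with parameters (v,k,λ,μ). Fix a vertex x and suppose y₁,…,y_{c'} (c' ≥ 2) are pairwise nonadjacent vertices in the neighbourhood of x, and suppose each μ-graph of Γ that is contained in a neighbourhood Γ₁(x) meets Γ₁(x) in at most μ − 1 vertices (i.e., for nonadjacent y_i, y_j, |Γ₁(x) ∩ Γ₁(y_i) ∩ Γ₁(y_j)| ≤ μ − 1). Then k ≥ c'(λ+1) − C(c',2)(μ−1), equivalently μ − 1 ≥ (c'(λ+1) − k)/C(c',2). -/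
lemma bonferroni {ι α : Type*} [DecidableEq α] [DecidableEq ι] (A : ι → Finset α) (m : ℕ) :
    ∀ s : Finset ι, (∀ i ∈ s, ∀ j ∈ s, i ≠ j → (A i ∩ A j).card ≤ m) →
    ∑ i ∈ s, (A i).card ≤ (s.biUnion A).card + s.card.choose 2 * m := by
  intro s
  induction s using Finset.cons_induction with
  | empty => simp
  | cons a t ha ih =>
    intro h
    have ih' := ih (fun i hi j hj hij => h i (by simp [hi]) j (by simp [hj]) hij)
    rw [Finset.sum_cons, Finset.cons_eq_insert, Finset.biUnion_insert,
      Finset.card_insert_of_notMem ha]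
    have hinter : (A a ∩ t.biUnion A).card ≤ t.card * m := by
      have : A a ∩ t.biUnion A = t.biUnion (fun i => A a ∩ A i) := by
        ext z; simp [Finset.mem_biUnion]; tauto
      rw [this]
      calc (t.biUnion fun i => A a ∩ A i).card ≤ ∑ i ∈ t, (A a ∩ A i).card :=
            Finset.card_biUnion_le
        _ ≤ ∑ _i ∈ t, m := Finset.sum_le_sum (fun i hi =>
            h a (by simp) i (by simp [hi]) (fun e => ha (e ▸ hi)))
        _ = t.card * m := by simp [mul_comm]
    have hunion : (A a).card + (t.biUnion A).card
        = (A a ∪ t.biUnion A).card + (A a ∩ t.biUnion A).card :=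
      (Finset.card_union_add_card_inter _ _).symm
    have hch : (t.card + 1).choose 2 = t.card.choose 2 + t.card := by
      rw [Nat.choose_succ_succ, Nat.choose_one_right, Nat.add_comm]
    rw [hch]
    calc (A a).card + ∑ i ∈ t, (A i).card
        ≤ (A a).card + ((t.biUnion A).card + t.card.choose 2 * m) := by omega
      _ = ((A a).card + (t.biUnion A).card) + t.card.choose 2 * m := by ring
      _ = ((A a ∪ t.biUnion A).card + (A a ∩ t.biUnion A).card) + t.card.choose 2 * m := by
          rw [hunion]
      _ ≤ (A a ∪ t.biUnion A).card + (t.card.choose 2 + t.card) * m := by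
          have := hinter; nlinarith



/-- The inclusion–exclusion counting in Proposition 4.1 (Koolen–Park bound):
if `Γ` is amply regular with parameters `(v, k, λ, μ)`, `x` is a vertex,
`y₁, …, y_{c'}` (`c' ≥ 2`) are pairwise nonadjacent neighbours of `x`, and
for all `i ≠ j` we have `|Γ₁(x) ∩ Γ₁(yᵢ) ∩ Γ₁(yⱼ)| ≤ μ - 1`, then
`k ≥ c'(λ+1) - C(c',2)(μ-1)`, stated additively as
`k + C(c',2)(μ-1) ≥ c'(λ+1)`. -/
theorem stmt_2 {V : Type*} [Fintype V] [DecidableEq V]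
    (G : SimpleGraph V) [DecidableRel G.Adj]
    (v k lam mu : ℕ) (hv : v = Fintype.card V) (hmu : 1 ≤ mu)
    (hreg : G.IsRegularOfDegree k)
    (hlam : ∀ u w : V, G.Adj u w →
      (G.neighborFinset u ∩ G.neighborFinset w).card = lam)
    (hamu : ∀ u w : V, u ≠ w → ¬G.Adj u w →
      (G.neighborFinset u ∩ G.neighborFinset w).Nonempty →
      (G.neighborFinset u ∩ G.neighborFinset w).card = mu)
    (x : V) (c' : ℕ) (hc' : 2 ≤ c')
    (y : Fin c' → V) (hinj : Function.Injective y)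
    (hnbr : ∀ i, G.Adj x (y i))
    (hcoc : ∀ i j, i ≠ j → ¬G.Adj (y i) (y j))
    (hmub : ∀ i j, i ≠ j →
      (G.neighborFinset x ∩ G.neighborFinset (y i) ∩ G.neighborFinset (y j)).card
        ≤ mu - 1) :
    k + c'.choose 2 * (mu - 1) ≥ c' * (lam + 1) := by
  classical
  set A : Fin c' → Finset V :=
    fun i => insert (y i) (G.neighborFinset x ∩ G.neighborFinset (y i)) with hA
  have hcardA : ∀ i, (A i).card = lam + 1 := by
    intro i
    rw [hA, Finset.card_insert_of_notMem, hlam x (y i) (hnbr i)]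
    intro h
    exact G.irrefl (SimpleGraph.mem_neighborFinset G (y i) (y i)|>.mp (Finset.mem_inter.mp h).2)
  have hsub : ∀ i, A i ⊆ G.neighborFinset x := by
    intro i
    apply Finset.insert_subset
    · exact (SimpleGraph.mem_neighborFinset G x (y i)).mpr (hnbr i)
    · exact Finset.inter_subset_left
  have hpair : ∀ i j : Fin c', i ≠ j → (A i ∩ A j).card ≤ mu - 1 := by
    intro i j hij
    have hsubij : A i ∩ A j ⊆
        G.neighborFinset x ∩ G.neighborFinset (y i) ∩ G.neighborFinset (y j) := by
      intro z hz
      rw [Finset.mem_inter] at hz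
      obtain ⟨hzi, hzj⟩ := hz
      rw [hA] at hzi hzj
      simp only [Finset.mem_insert, Finset.mem_inter] at hzi hzj
      rcases hzi with rfl | hzi
      · rcases hzj with h | hzj
        · exact absurd (hinj h) hij
        · exact absurd ((SimpleGraph.mem_neighborFinset G (y j) _).mp hzj.2).symm
            (hcoc i j hij)
      · rcases hzj with rfl | hzj
        · exact absurd ((SimpleGraph.mem_neighborFinset G (y i) _).mp hzi.2)
            (hcoc i j hij)
        · simp only [Finset.mem_inter]
          exact ⟨⟨hzi.1, hzi.2⟩, hzj.2⟩
    exact le_trans (Finset.card_le_card hsubij) (hmub i j hij)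
  have hbonf := bonferroni A (mu - 1) Finset.univ
    (fun i _ j _ hij => hpair i j hij)
  have hsum : ∑ i : Fin c', (A i).card = c' * (lam + 1) := by
    simp [hcardA, Finset.sum_const, mul_comm]
  have hU : (Finset.univ.biUnion A).card ≤ k := by
    calc (Finset.univ.biUnion A).card ≤ (G.neighborFinset x).card :=
          Finset.card_le_card (Finset.biUnion_subset.mpr (fun i _ => hsub i))
      _ = k := hreg x
  simp only [hsum, Finset.card_univ, Fintype.card_fin] at hbonf
  omega
end

section
/- Let Γ be an amply regular graph with parameters (v,k,λ,μ), and let c ≥ 2 be maximal such that for each vertex x and every pair of nonadjacent vertices y,z in Γ₁(x) there exists a c-coclique in Γ₁(x) containing y and z. If μ − 1 = max{(c'(λ+1) − k)/C(c',2) : 2 ≤ c' ≤ c}, then Γ is a Terwilliger graph: every μ-graph of Γ is a clique of size μ. -/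
lemma two_mul_choose_two (n : ℕ) : 2 * n.choose 2 = n * (n - 1) := by
  rw [Nat.choose_two_right]
  rcases n with _ | m
  · simp
  · have h : 2 ∣ (m + 1) * m := by
      rw [mul_comm]; exact (Nat.even_mul_succ_self m).two_dvd
    simpa using Nat.mul_div_cancel' h

lemma bonferroni_s3 {V : Type*} [DecidableEq V] (A : V → Finset V) (T : Finset V) :
    2 * ∑ t ∈ T, (A t).card ≤
      2 * (T.biUnion A).card + ∑ p ∈ T.offDiag, (A p.1 ∩ A p.2).card := by
  induction T using Finset.induction_on with
  | empty => simp
  | @insert a s ha ih =>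
    rw [Finset.sum_insert ha, Finset.biUnion_insert, Finset.offDiag_insert ha]
    have hd1 : Disjoint (s.offDiag ∪ {a} ×ˢ s) (s ×ˢ {a}) := by
      rw [Finset.disjoint_left]
      rintro ⟨p1, p2⟩ hp hq
      simp only [Finset.mem_product, Finset.mem_singleton] at hq
      simp only [Finset.mem_union, Finset.mem_offDiag, Finset.mem_product,
        Finset.mem_singleton] at hp
      rcases hp with ⟨_, h1, _⟩ | ⟨_, h2⟩ <;> [exact ha (hq.2 ▸ h1); exact ha (hq.2 ▸ h2)]
    have hd2 : Disjoint s.offDiag ({a} ×ˢ s) := by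
      rw [Finset.disjoint_left]
      rintro ⟨p1, p2⟩ hp hq
      simp only [Finset.mem_product, Finset.mem_singleton] at hq
      simp only [Finset.mem_offDiag] at hp
      exact ha (hq.1 ▸ hp.1)
    rw [Finset.sum_union hd1, Finset.sum_union hd2]
    have e1 : ∑ p ∈ {a} ×ˢ s, (A p.1 ∩ A p.2).card = ∑ t ∈ s, (A a ∩ A t).card := by
      rw [Finset.sum_product]; simp
    have e2 : ∑ p ∈ s ×ˢ {a}, (A p.1 ∩ A p.2).card = ∑ t ∈ s, (A a ∩ A t).card := by
      rw [Finset.sum_product]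
      simp [Finset.inter_comm]
    rw [e1, e2]
    have h2 : (A a ∪ s.biUnion A).card + (A a ∩ s.biUnion A).card
        = (A a).card + (s.biUnion A).card := Finset.card_union_add_card_inter _ _
    have h3 : A a ∩ s.biUnion A = s.biUnion (fun t => A a ∩ A t) := by
      ext x
      simp only [Finset.mem_inter, Finset.mem_biUnion]
      tauto
    have h4 : (A a ∩ s.biUnion A).card ≤ ∑ t ∈ s, (A a ∩ A t).card := by
      rw [h3]; exact Finset.card_biUnion_le
    omega

/-- Proposition 4.1 (Koolen–Park): let `Γ` be amply regular with parameters
`(v, k, λ, μ)` and let `c ≥ 2` be maximal such that for each vertex `x` and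
every pair of nonadjacent vertices `y, z ∈ Γ₁(x)` there is a `c`-coclique in
`Γ₁(x)` containing `y, z`.  If equality holds in the μ-bound, i.e.
`μ - 1 = max{(c'(λ+1) - k)/C(c',2) : 2 ≤ c' ≤ c}`, then `Γ` is a Terwilliger
graph: every μ-graph of `Γ` is a clique (of size `μ`). -/
theorem stmt_3 {V : Type*} [Fintype V] [DecidableEq V]
    (G : SimpleGraph V) [DecidableRel G.Adj]
    (v k lam mu : ℕ) (hv : v = Fintype.card V) (hmu : 1 ≤ mu)
    (hreg : G.IsRegularOfDegree k)
    (hlam : ∀ u w : V, G.Adj u w →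
      (G.neighborFinset u ∩ G.neighborFinset w).card = lam)
    (hamu : ∀ u w : V, u ≠ w → ¬G.Adj u w →
      (G.neighborFinset u ∩ G.neighborFinset w).Nonempty →
      (G.neighborFinset u ∩ G.neighborFinset w).card = mu)
    (c : ℕ) (hc2 : 2 ≤ c)
    (hcoc : ∀ x y z : V, G.Adj x y → G.Adj x z → y ≠ z → ¬G.Adj y z →
      ∃ S : Finset V, S ⊆ G.neighborFinset x ∧ S.card = c ∧ y ∈ S ∧ z ∈ S ∧
        ∀ a ∈ S, ∀ b ∈ S, a ≠ b → ¬G.Adj a b)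
    (hcmax : ¬ ∀ x y z : V, G.Adj x y → G.Adj x z → y ≠ z → ¬G.Adj y z →
      ∃ S : Finset V, S ⊆ G.neighborFinset x ∧ S.card = c + 1 ∧ y ∈ S ∧ z ∈ S ∧
        ∀ a ∈ S, ∀ b ∈ S, a ≠ b → ¬G.Adj a b)
    (heq : (mu : ℚ) - 1 =
      (((Finset.Icc 2 c).image
          (fun c' : ℕ => ((c' : ℚ) * (lam + 1) - k) / (c'.choose 2 : ℚ))).max'
        (((Finset.nonempty_Icc).mpr hc2).image _))) :
    ∀ u w : V, u ≠ w → ¬G.Adj u w →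
      (G.neighborFinset u ∩ G.neighborFinset w).Nonempty →
      ((G.neighborFinset u ∩ G.neighborFinset w).card = mu ∧
        ∀ a ∈ G.neighborFinset u ∩ G.neighborFinset w,
          ∀ b ∈ G.neighborFinset u ∩ G.neighborFinset w, a ≠ b → G.Adj a b) := by
  intro u w huw hnadj hne
  refine ⟨hamu u w huw hnadj hne, ?_⟩
  intro a ha b hb hab
  by_contra hnab
  rw [Finset.mem_inter, SimpleGraph.mem_neighborFinset,
    SimpleGraph.mem_neighborFinset] at ha hb
  obtain ⟨hua, hwa⟩ := ha
  obtain ⟨hub, hwb⟩ := hb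
  obtain ⟨S, hSsub, hScard, haS, hbS, hScoc⟩ := hcoc u a b hua hub hab hnab
  -- extract the maximizing c₀ and the key equation
  have hmem : ((mu : ℚ) - 1) ∈ (Finset.Icc 2 c).image
      (fun c' : ℕ => ((c' : ℚ) * (lam + 1) - k) / (c'.choose 2 : ℚ)) :=
    heq ▸ Finset.max'_mem _ _
  obtain ⟨c₀, hc₀mem, hfc₀⟩ := Finset.mem_image.mp hmem
  obtain ⟨hc₀2, hc₀c⟩ := Finset.mem_Icc.mp hc₀mem
  set C := c₀.choose 2 with hC
  have hCpos : 0 < C := Nat.choose_pos (by omega)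
  have hCQ : (C : ℚ) ≠ 0 := Nat.cast_ne_zero.mpr hCpos.ne'
  have qkey : (c₀ : ℚ) * ((lam : ℚ) + 1) + (C : ℚ) = (mu : ℚ) * C + k := by
    field_simp at hfc₀
    linear_combination hfc₀
  have key : c₀ * (lam + 1) + C = mu * C + k := by exact_mod_cast qkey
  -- choose T ⊆ S with a, b ∈ T and |T| = c₀
  have habS : ({a, b} : Finset V) ⊆ S := by
    intro x hx
    rcases Finset.mem_insert.mp hx with rfl | hx
    · exact haS
    · exact (Finset.mem_singleton.mp hx) ▸ hbS
  have habcard : ({a, b} : Finset V).card = 2 := Finset.card_pair hab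
  obtain ⟨T, habT, hTS, hTcard⟩ := Finset.exists_subsuperset_card_eq (n := c₀) habS
    (by rw [habcard]; omega) (by rw [hScard]; omega)
  have haT : a ∈ T := habT (by simp)
  have hbT : b ∈ T := habT (by simp)
  -- the families
  set A : V → Finset V := fun t => insert t (G.neighborFinset u ∩ G.neighborFinset t)
    with hAdef
  set A' : V → Finset V := fun t => if t = a ∨ t = b then insert w (A t) else A t
    with hA'def
  have hTNu : ∀ t ∈ T, G.Adj u t := fun t ht => by
    have := hSsub (hTS ht); rwa [SimpleGraph.mem_neighborFinset] at this
  have hwNu : w ∉ G.neighborFinset u := by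
    rw [SimpleGraph.mem_neighborFinset]; exact hnadj
  have hwA : ∀ t ∈ T, w ∉ A t := by
    intro t ht hw
    rcases Finset.mem_insert.mp hw with rfl | hw
    · exact hnadj (hTNu w ht)
    · exact hwNu (Finset.mem_inter.mp hw).1
  have hA'sub : ∀ x t, x ∈ A' t → x = w ∨ x ∈ A t := by
    intro x t hx
    by_cases h : t = a ∨ t = b
    · rw [hA'def] at hx; simp only [if_pos h] at hx
      rcases Finset.mem_insert.mp hx with h' | h'
      · exact Or.inl h'
      · exact Or.inr h'
    · rw [hA'def] at hx; simp only [if_neg h] at hx; exact Or.inr hx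
  -- cardinalities of A' t
  have hAcard : ∀ t ∈ T, (A t).card = lam + 1 := by
    intro t ht
    rw [hAdef]
    rw [Finset.card_insert_of_notMem, hlam u t (hTNu t ht)]
    intro h
    exact G.irrefl ((Finset.mem_inter.mp h).2 |> (SimpleGraph.mem_neighborFinset _ _ _).mp)
  -- biUnion bound
  have hBU : (T.biUnion A').card ≤ k + 1 := by
    have hsub : T.biUnion A' ⊆ insert w (G.neighborFinset u) := by
      intro x hx
      obtain ⟨t, ht, hxt⟩ := Finset.mem_biUnion.mp hx
      rcases hA'sub x t hxt with rfl | hx'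
      · exact Finset.mem_insert_self _ _
      · rcases Finset.mem_insert.mp hx' with rfl | hx''
        · exact Finset.mem_insert_of_mem (by rw [SimpleGraph.mem_neighborFinset]; exact hTNu x ht)
        · exact Finset.mem_insert_of_mem (Finset.mem_inter.mp hx'').1
    calc (T.biUnion A').card ≤ (insert w (G.neighborFinset u)).card := Finset.card_le_card hsub
      _ ≤ (G.neighborFinset u).card + 1 := Finset.card_insert_le _ _
      _ = k + 1 := by rw [G.card_neighborFinset_eq_degree, hreg u]
  -- pairwise intersection bound
  have hpair : ∀ p ∈ T.offDiag, (A' p.1 ∩ A' p.2).card ≤ mu - 1 := by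
    rintro ⟨s, t⟩ hp
    obtain ⟨hs, ht, hst⟩ := Finset.mem_offDiag.mp hp
    have hnst : ¬G.Adj s t := hScoc s (hTS hs) t (hTS ht) hst
    have huI : u ∈ G.neighborFinset s ∩ G.neighborFinset t := by
      rw [Finset.mem_inter, SimpleGraph.mem_neighborFinset, SimpleGraph.mem_neighborFinset]
      exact ⟨(hTNu s hs).symm, (hTNu t ht).symm⟩
    have hIcard : (G.neighborFinset s ∩ G.neighborFinset t).card = mu :=
      hamu s t hst hnst ⟨u, huI⟩
    have hsub : A' s ∩ A' t ⊆ (G.neighborFinset s ∩ G.neighborFinset t).erase u := by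
      intro x hx
      obtain ⟨hxs, hxt⟩ := Finset.mem_inter.mp hx
      rw [Finset.mem_erase]
      by_cases hxw : x = w
      · subst hxw
        have hsab : s = a ∨ s = b := by
          by_contra hc'
          have : A' s = A s := by rw [hA'def]; simp only [if_neg hc']
          rw [this] at hxs
          exact hwA s hs hxs
        have htab : t = a ∨ t = b := by
          by_contra hc'
          have : A' t = A t := by rw [hA'def]; simp only [if_neg hc']
          rw [this] at hxt
          exact hwA t ht hxt
        have hsw : G.Adj s x := by
          rcases hsab with rfl | rfl
          · exact hwa.symm
          · exact hwb.symm
        have htw : G.Adj t x := by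
          rcases htab with rfl | rfl
          · exact hwa.symm
          · exact hwb.symm
        refine ⟨fun h => huw h.symm, Finset.mem_inter.mpr ⟨?_, ?_⟩⟩
        · rwa [SimpleGraph.mem_neighborFinset]
        · rwa [SimpleGraph.mem_neighborFinset]
      · have hxs' : x ∈ A s := (hA'sub x s hxs).resolve_left hxw
        have hxt' : x ∈ A t := (hA'sub x t hxt).resolve_left hxw
        have hxs'' : x ∈ G.neighborFinset u ∩ G.neighborFinset s := by
          rcases Finset.mem_insert.mp hxs' with rfl | h
          · exfalso
            rcases Finset.mem_insert.mp hxt' with rfl | h'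
            · exact hst rfl
            · exact hnst ((SimpleGraph.mem_neighborFinset _ _ _).mp (Finset.mem_inter.mp h').2).symm
          · exact h
        have hxt'' : x ∈ G.neighborFinset u ∩ G.neighborFinset t := by
          rcases Finset.mem_insert.mp hxt' with rfl | h
          · exact absurd ((SimpleGraph.mem_neighborFinset _ _ _).mp (Finset.mem_inter.mp hxs'').2) hnst
          · exact h
        refine ⟨?_, Finset.mem_inter.mpr ⟨(Finset.mem_inter.mp hxs'').2, (Finset.mem_inter.mp hxt'').2⟩⟩
        intro hxu
        subst hxu
        exact G.irrefl ((SimpleGraph.mem_neighborFinset _ _ _).mp (Finset.mem_inter.mp hxs'').1)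
    calc (A' s ∩ A' t).card ≤ ((G.neighborFinset s ∩ G.neighborFinset t).erase u).card :=
        Finset.card_le_card hsub
      _ = mu - 1 := by rw [Finset.card_erase_of_mem huI, hIcard]
  -- total sum of cards
  have hwa' : G.Adj a w := hwa.symm
  have hwb' : G.Adj b w := hwb.symm
  have hwna : w ≠ a := fun h => G.irrefl (h ▸ hwa')
  have hwnb : w ≠ b := fun h => G.irrefl (h ▸ hwb')
  have hA'aeq : A' a = insert w (A a) := by
    rw [hA'def]; simp
  have hA'beq : A' b = insert w (A b) := by
    rw [hA'def]; simp
  have hA'a : (A' a).card = lam + 2 := by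
    rw [hA'aeq, Finset.card_insert_of_notMem (hwA a haT), hAcard a haT]
  have hA'b : (A' b).card = lam + 2 := by
    rw [hA'beq, Finset.card_insert_of_notMem (hwA b hbT), hAcard b hbT]
  have hTsplit : T = insert a (insert b (T \ {a, b})) := by
    ext x
    simp only [Finset.mem_insert, Finset.mem_sdiff, Finset.mem_singleton]
    constructor
    · intro hx
      by_cases hxa : x = a
      · exact Or.inl hxa
      · by_cases hxb : x = b
        · exact Or.inr (Or.inl hxb)
        · exact Or.inr (Or.inr ⟨hx, by tauto⟩)
    · rintro (rfl | rfl | ⟨hx, _⟩) <;> [exact haT; exact hbT; exact hx]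
  have hSsum : ∑ t ∈ T, (A' t).card = c₀ * (lam + 1) + 2 := by
    rw [hTsplit, Finset.sum_insert (by simp [hab]), Finset.sum_insert (by simp)]
    have hrest : ∑ t ∈ T \ {a, b}, (A' t).card = (c₀ - 2) * (lam + 1) := by
      rw [Finset.sum_congr rfl (fun t ht => ?_), Finset.sum_const, smul_eq_mul]
      · congr 1
        rw [Finset.card_sdiff_of_subset habT, habcard, hTcard]
      · obtain ⟨htT, hne'⟩ := Finset.mem_sdiff.mp ht
        simp only [Finset.mem_insert, Finset.mem_singleton] at hne'
        push_neg at hne'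
        rw [hA'def]
        simp only [if_neg (by tauto : ¬(t = a ∨ t = b))]
        exact hAcard t htT
    rw [hrest, hA'a, hA'b]
    have h1 : (c₀ - 2) * (lam + 1) + 2 * (lam + 1) = c₀ * (lam + 1) := by
      rw [← add_mul]; congr 1; omega
    omega
  -- offDiag card
  have hoff : (T.offDiag).card = 2 * C := by
    rw [Finset.offDiag_card, hTcard, two_mul_choose_two]
    have : c₀ * (c₀ - 1) + c₀ = c₀ * c₀ := by rw [← Nat.mul_succ]; congr 1; omega
    omega
  -- combine
  have hbon := bonferroni_s3 A' T
  have hP : ∑ p ∈ T.offDiag, (A' p.1 ∩ A' p.2).card ≤ (2 * C) * (mu - 1) := by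
    calc ∑ p ∈ T.offDiag, (A' p.1 ∩ A' p.2).card
        ≤ (T.offDiag).card • (mu - 1) := Finset.sum_le_card_nsmul _ _ _ hpair
      _ = (2 * C) * (mu - 1) := by rw [hoff, smul_eq_mul]
  have hE : C * (mu - 1) + C = C * mu := by rw [← Nat.mul_succ]; congr 1; omega
  have hfin : (2 * C) * (mu - 1) = 2 * (C * (mu - 1)) := by ring
  rw [hSsum] at hbon
  have h1 : 2 * (c₀ * (lam + 1) + 2) ≤ 2 * (k + 1) + 2 * (C * (mu - 1)) :=
    calc 2 * (c₀ * (lam + 1) + 2)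
        ≤ 2 * (T.biUnion A').card + ∑ p ∈ T.offDiag, (A' p.1 ∩ A' p.2).card := hbon
      _ ≤ 2 * (k + 1) + (2 * C) * (mu - 1) :=
        add_le_add (Nat.mul_le_mul_left 2 hBU) hP
      _ = 2 * (k + 1) + 2 * (C * (mu - 1)) := by rw [hfin]
  have key2 : c₀ * (lam + 1) + C = C * mu + k := key.trans (by ring)
  omega
end

section
/- There is no strongly regular graph with parameters k = 50, λ = 7, μ = 2, because the roots of x² − 5x − 48 = 0 are not integers, while the non-principal eigenvalues of a strongly regular graph with μ ≠ λ and v > k+1 must be integers (or conjugate irrationals only in the conference graph case, which requires λ = μ − 1). -/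
open Polynomial Matrix

/-- If `θ` is a root of the characteristic polynomial of a complex matrix `M`
and `q(M) = 0`, then `q(θ) = 0`. -/
lemma aux_eval_eq_zero_of_root_charpoly {n : Type*} [Fintype n] [DecidableEq n]
    [Nonempty n] (M : Matrix n n ℂ) {θ : ℂ} (hθ : M.charpoly.IsRoot θ)
    (q : ℂ[X]) (hq : Polynomial.aeval M q = 0) : q.eval θ = 0 := by
  have hdet : (Matrix.scalar n θ - M).det = 0 := by
    have : M.charpoly.eval θ = (Matrix.scalar n θ - M).det := by
      rw [Matrix.charpoly, eval_det, matPolyEquiv_charmatrix]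
      simp
    rw [← this]
    exact hθ
  have hmem : θ ∈ spectrum ℂ M := by
    rw [spectrum.mem_iff]
    intro hu
    have h2 : algebraMap ℂ (Matrix n n ℂ) θ - M = Matrix.scalar n θ - M := by
      congr 1
    rw [h2] at hu
    have := hu.map (Matrix.detMonoidHom (n := n) (R := ℂ))
    rw [Matrix.coe_detMonoidHom, hdet] at this
    exact not_isUnit_zero this
  have hmem2 : q.eval θ ∈ spectrum ℂ (Polynomial.aeval M q) :=
    spectrum.subset_polynomial_aeval M q ⟨θ, hmem, rfl⟩
  rw [hq, spectrum.zero_eq] at hmem2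
  simpa using hmem2

set_option maxHeartbeats 1000000 in
/-- There is no strongly regular graph with `k = 50`, `λ = 7`, `μ = 2`
(the non-principal eigenvalues would be roots of `x² - 5x - 48 = 0`, which
are irrational, and the conference-graph condition `λ = μ - 1` fails). -/
theorem stmt_4 {V : Type*} [Fintype V] [Nonempty V]
    (G : SimpleGraph V) [DecidableRel G.Adj] (v : ℕ) :
    ¬ G.IsSRGWith v 50 7 2 := by
  classical
  intro h
  -- Step 1: the number of vertices is 1101.
  have hcard : Fintype.card V = v := h.card
  have hvpos : 0 < v := hcard ▸ Fintype.card_pos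
  have hpe := SimpleGraph.IsSRGWith.param_eq G h hvpos
  have hv : v = 1101 := by omega
  -- Step 2: matrix identities.
  set A : Matrix V V ℂ := G.adjMatrix ℂ with hA
  set J : Matrix V V ℂ := Matrix.of (fun _ _ => (1 : ℂ)) with hJ
  have hcompl : Gᶜ.adjMatrix ℂ = J - 1 - A := by
    ext i j
    by_cases hij : i = j
    · subst hij; simp [hJ, hA]
    · by_cases ha : G.Adj i j <;>
        simp [hJ, hA, Matrix.sub_apply, Matrix.one_apply, hij, ha, SimpleGraph.compl_adj]
  have hAJ : A * J = (50 : ℂ) • J := by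
    ext i j
    rw [hA, SimpleGraph.adjMatrix_mul_apply]
    simp [hJ, h.regular i]
  have hA2 : A * A = (48 : ℂ) • 1 + (5 : ℂ) • A + (2 : ℂ) • J := by
    have hm := h.matrix_eq (α := ℂ)
    rw [hcompl, pow_two] at hm
    rw [hm]
    have c50 : (50 : ℕ) • (1 : Matrix V V ℂ) = (50 : ℂ) • 1 := by
      rw [← Nat.cast_smul_eq_nsmul ℂ]; norm_num
    have c7 : (7 : ℕ) • A = (7 : ℂ) • A := by
      rw [← Nat.cast_smul_eq_nsmul ℂ]; norm_num
    have c2 : (2 : ℕ) • (J - 1 - A) = (2 : ℂ) • (J - 1 - A) := by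
      rw [← Nat.cast_smul_eq_nsmul ℂ]; norm_num
    rw [c50, c7, c2, smul_sub, smul_sub]
    module
  -- Step 3: A satisfies q(A) = 0 for q = (X - 50)(X² - 5X - 48).
  set q : ℂ[X] := (X - C 50) * (X ^ 2 - C 5 * X - C 48) with hq
  have hqA : Polynomial.aeval A q = 0 := by
    have : Polynomial.aeval A q
        = (A - (50 : ℂ) • 1) * (A * A - (5 : ℂ) • A - (48 : ℂ) • 1) := by
      simp [hq, pow_two, Algebra.algebraMap_eq_smul_one]
    rw [this, hA2]
    have h1 : (48 : ℂ) • (1 : Matrix V V ℂ) + (5 : ℂ) • A + (2 : ℂ) • J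
        - (5 : ℂ) • A - (48 : ℂ) • 1 = (2 : ℂ) • J := by module
    rw [h1, mul_smul_comm, sub_mul, hAJ, smul_mul_assoc, one_mul]
    rw [smul_sub, smul_smul]
    exact sub_self _
  -- Step 4: the roots of the characteristic polynomial.
  set p : ℂ[X] := A.charpoly with hp
  have hmono : p.Monic := A.charpoly_monic
  have hdeg : p.natDegree = 1101 := by
    rw [hp, Matrix.charpoly_natDegree_eq_dim, hcard, hv]
  have hroots_card : p.roots.card = 1101 := by
    rw [← hdeg]
    exact (splits_iff_card_roots.mp (IsAlgClosed.splits p))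
  have hroots_sum : p.roots.sum = 0 := by
    have := Matrix.trace_eq_sum_roots_charpoly A
    rw [SimpleGraph.trace_adjMatrix] at this
    exact this.symm
  -- the three possible eigenvalues
  have h217 : Real.sqrt 217 * Real.sqrt 217 = 217 :=
    Real.mul_self_sqrt (by norm_num)
  set r : ℝ := (5 + Real.sqrt 217) / 2 with hr
  set s : ℝ := (5 - Real.sqrt 217) / 2 with hs
  set rc : ℂ := (r : ℂ) with hrc
  set sc : ℂ := (s : ℂ) with hsc
  have hsumrs : rc + sc = 5 := by
    rw [hrc, hsc, ← Complex.ofReal_add]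
    norm_num [hr, hs]
    push_cast
    ring
  have hprodrs : rc * sc = -48 := by
    rw [hrc, hsc, ← Complex.ofReal_mul]
    have : r * s = -48 := by
      rw [hr, hs]
      field_simp
      nlinarith [h217]
    rw [this]; norm_num
  have hmem : ∀ θ ∈ p.roots, θ = 50 ∨ θ = rc ∨ θ = sc := by
    intro θ hθ
    have hroot : p.IsRoot θ := (mem_roots'.mp hθ).2
    have hqθ : q.eval θ = 0 := aux_eval_eq_zero_of_root_charpoly A hroot q hqA
    rw [hq] at hqθ
    simp only [eval_mul, eval_sub, eval_pow, eval_X, eval_C, mul_eq_zero] at hqθ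
    rcases hqθ with h1 | h2
    · left; exact sub_eq_zero.mp h1
    · right
      have : (θ - rc) * (θ - sc) = 0 := by
        have expand : (θ - rc) * (θ - sc) = θ ^ 2 - (rc + sc) * θ + rc * sc := by ring
        rw [expand, hsumrs, hprodrs]
        linear_combination h2
      rcases mul_eq_zero.mp this with h3 | h4
      · left; exact sub_eq_zero.mp h3
      · right; exact sub_eq_zero.mp h4
  -- Step 5: counting
  set a : ℕ := p.roots.count 50 with ha
  set b : ℕ := p.roots.count rc with hb
  set c : ℕ := p.roots.count sc with hc
  have hsqrt_pos : (0:ℝ) < Real.sqrt 217 := Real.sqrt_pos.mpr (by norm_num)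
  have hsqrt_lt : Real.sqrt 217 < 15 := by
    nlinarith [h217]
  have hne50r : (50 : ℂ) ≠ rc := by
    rw [hrc]
    intro hcontra
    have : (50 : ℝ) = r := by exact_mod_cast hcontra
    rw [hr] at this; nlinarith
  have hne50s : (50 : ℂ) ≠ sc := by
    rw [hsc]
    intro hcontra
    have : (50 : ℝ) = s := by exact_mod_cast hcontra
    rw [hs] at this; nlinarith
  have hners : rc ≠ sc := by
    rw [hrc, hsc]
    intro hcontra
    have : r = s := by exact_mod_cast hcontra
    rw [hr, hs] at this; nlinarith
  have hsubset : p.roots.toFinset ⊆ {50, rc, sc} := by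
    intro x hx
    rcases hmem x (Multiset.mem_toFinset.mp hx) with rfl | rfl | rfl <;> simp
  have hcount_card : a + b + c = 1101 := by
    have := Multiset.toFinset_sum_count_eq p.roots
    rw [hroots_card] at this
    rw [← this]
    rw [Finset.sum_subset hsubset (fun x _ hx =>
      Multiset.count_eq_zero_of_notMem (fun hm => hx (Multiset.mem_toFinset.mpr hm)))]
    rw [Finset.sum_insert (by simp [hne50r, hne50s]),
      Finset.sum_insert (by simp [hners]), Finset.sum_singleton]
    omega
  have hcount_sum : (a : ℂ) * 50 + (b : ℂ) * rc + (c : ℂ) * sc = 0 := by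
    have h1 : ∑ x ∈ p.roots.toFinset, p.roots.count x • x
        = ∑ x ∈ ({50, rc, sc} : Finset ℂ), p.roots.count x • x :=
      Finset.sum_subset hsubset (fun x _ hx => by
        simp [Multiset.count_eq_zero_of_notMem (fun hm => hx (Multiset.mem_toFinset.mpr hm))])
    have h0 : (0 : ℂ) = ∑ x ∈ ({50, rc, sc} : Finset ℂ), p.roots.count x • x := by
      rw [← h1, ← Finset.sum_multiset_count, hroots_sum]
    rw [Finset.sum_insert (by simp [hne50r, hne50s]),
      Finset.sum_insert (by simp [hners]), Finset.sum_singleton] at h0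
    simp only [nsmul_eq_mul] at h0
    rw [ha, hb, hc]
    linear_combination -h0
  clear_value A J q p r s rc sc a b c
  clear hA hJ hcompl hAJ hA2 hq hqA hp hmono hdeg hroots_card hroots_sum hsumrs hprodrs hmem hsubset ha hb hc
  -- Step 6: derive the real equation and contradiction
  have hreal : (a : ℝ) * 50 + (b : ℝ) * r + (c : ℝ) * s = 0 := by
    have : ((a : ℝ) * 50 + (b : ℝ) * r + (c : ℝ) * s : ℂ) = 0 := by
      push_cast
      rw [← hrc, ← hsc]
      exact_mod_cast hcount_sum
    exact_mod_cast this
  have hkey : ((b : ℝ) - c) * Real.sqrt 217 = -(100 * a + 5 * b + 5 * c) := by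
    rw [hr, hs] at hreal
    linear_combination 2 * hreal
  by_cases hbc : b = c
  · have h2 : ((100 * a + 5 * b + 5 * c : ℕ) : ℝ) = 0 := by
      push_cast
      rw [hbc] at hkey ⊢
      have hz : ((c : ℝ) - c) * Real.sqrt 217 = 0 := by ring
      linarith [hkey, hz]
    have h3 : 100 * a + 5 * b + 5 * c = 0 := by exact_mod_cast h2
    omega
  · have hirr : Irrational (Real.sqrt 217) := by
      rw [show ((217:ℝ) = ((217:ℕ):ℝ)) by norm_num]
      rw [irrational_sqrt_natCast_iff]
      rintro ⟨t, ht⟩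
      have h1 : t ≤ 15 := by nlinarith
      interval_cases t <;> omega
    have hbcne : ((b : ℝ) - c) ≠ 0 := by
      intro hcontra
      apply hbc
      have : (b : ℝ) = c := by linarith
      exact_mod_cast this
    set q0 : ℚ := (-(100 * (a:ℚ) + 5 * b + 5 * c)) / ((b:ℚ) - c) with hq0
    have hbcq : ((b:ℚ) - c) ≠ 0 := by
      intro hcontra
      apply hbc
      have : (b:ℚ) = c := by linarith
      exact_mod_cast this
    have hcast : ((q0 : ℝ)) = Real.sqrt 217 := by
      rw [hq0]
      push_cast
      rw [div_eq_iff hbcne]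
      linarith [hkey]
    exact hirr ⟨q0, hcast⟩
end

section
/- Any strongly regular graph with λ = 0 and μ = 1 (a Moore graph of diameter 2) has degree k ∈ {2, 3, 7, 57}. -/
open Matrix Finset

set_option maxHeartbeats 1000000 in
/-- Any (noncomplete) strongly regular graph with `λ = 0` and `μ = 1`, i.e.
a Moore graph of diameter 2, has degree `k ∈ {2, 3, 7, 57}`. -/
theorem stmt_11 {V : Type*} [Fintype V] (G : SimpleGraph V) [DecidableRel G.Adj]
    (v k : ℕ) (hsrg : G.IsSRGWith v k 0 1)
    (hnc : ∃ u w : V, u ≠ w ∧ ¬G.Adj u w) :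
    k = 2 ∨ k = 3 ∨ k = 7 ∨ k = 57 := by
  classical
  obtain ⟨u, w, huw, hnadj⟩ := hnc
  -- Step 0 : `k ≥ 2`.
  have hcn := hsrg.of_not_adj huw hnadj
  have hk2 : 2 ≤ k := by
    have h1 : 0 < Fintype.card (G.commonNeighbors u w) := by rw [hcn]; norm_num
    obtain ⟨z, hz⟩ := Fintype.card_pos_iff.mp h1
    have hzu : G.Adj z u := (hz.1 : G.Adj u z).symm
    have hzw : G.Adj z w := (hz.2 : G.Adj w z).symm
    have hsub : ({u, w} : Finset V) ⊆ G.neighborFinset z := by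
      intro x hx
      simp only [Finset.mem_insert, Finset.mem_singleton] at hx
      rcases hx with rfl | rfl <;> simp [SimpleGraph.mem_neighborFinset, hzu, hzw]
    have := Finset.card_le_card hsub
    rwa [Finset.card_insert_of_notMem (by simp [huw]), Finset.card_singleton,
      G.card_neighborFinset_eq_degree, hsrg.regular z] at this
  -- Step 1 : matrix identities.
  set A : Matrix V V ℝ := G.adjMatrix ℝ with hAdef
  set J : Matrix V V ℝ := Matrix.of (fun _ _ => (1:ℝ)) with hJdef
  have hJ : A * A + A + ((1:ℝ) - k) • 1 = J := by
    have h1 := hsrg.matrix_eq (α := ℝ)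
    have h2 := G.one_add_adjMatrix_add_compl_adjMatrix_eq_allOnes (α := ℝ)
    have h3 : (G.adjMatrix ℝ).compl = Gᶜ.adjMatrix ℝ := by
      ext i j
      simp [Matrix.compl, SimpleGraph.compl_adj]
      split_ifs <;> simp_all
    rw [pow_two] at h1
    rw [hJdef, show (Matrix.of (fun _ _ => (1:ℝ)) : Matrix V V ℝ) = Matrix.of 1 from rfl, ← h2, h3, hAdef, h1]
    module
  have hAJ : A * J = (k:ℝ) • J := by
    ext i j
    simp only [hJdef, hAdef, Matrix.smul_apply, Matrix.of_apply, smul_eq_mul, mul_one,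
      SimpleGraph.adjMatrix_mul_apply]
    simp [hsrg.regular i]
  have hJJ : J * J = ((Fintype.card V : ℝ)) • J := by
    ext i j
    simp [hJdef, Matrix.mul_apply]
  have hvcard : Fintype.card V = v := hsrg.card
  -- Step 2 : `v = k ^ 2 + 1`.
  have hv : v = k^2 + 1 := by
    have h4 : (A * A + A + ((1:ℝ) - k) • 1) * J = ((k:ℝ)^2 + k + (1 - k)) • J := by
      rw [Matrix.add_mul, Matrix.add_mul, Matrix.mul_assoc, hAJ, Matrix.mul_smul, hAJ,
        Matrix.smul_mul, Matrix.one_mul, smul_smul]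
      rw [pow_two]
      module
    rw [hJ, hJJ] at h4
    have h5 := congrFun (congrFun h4 u) u
    simp only [Matrix.smul_apply, hJdef, Matrix.of_apply, smul_eq_mul, mul_one] at h5
    have : (v:ℝ) = (k:ℝ)^2 + 1 := by rw [← hvcard]; linarith
    exact_mod_cast this
  -- Step 3 : spectral data.
  have hA : A.IsHermitian := by
    rw [Matrix.IsHermitian, Matrix.conjTranspose_eq_transpose_of_trivial, hAdef]
    exact G.transpose_adjMatrix
  set e : V → ℝ := hA.eigenvalues with hedef
  set U : Matrix V V ℝ := (hA.eigenvectorUnitary : Matrix V V ℝ) with hUdef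
  have hU : star U * U = 1 := Matrix.mem_unitaryGroup_iff'.mp hA.eigenvectorUnitary.2
  set D : Matrix V V ℝ := Matrix.diagonal (RCLike.ofReal ∘ e) with hDdef
  have hspec : A = U * D * star U := hA.spectral_theorem
  have htr1 : ∑ i, e i = 0 := by
    have : Matrix.trace A = ∑ i, e i := by
      conv_lhs => rw [hspec]
      rw [Matrix.trace_mul_comm, ← Matrix.mul_assoc, hU, Matrix.one_mul, hDdef,
        Matrix.trace_diagonal]
      simp
    rw [← this, hAdef, SimpleGraph.trace_adjMatrix]
  have htr2 : ∑ i, (e i)^2 = (Fintype.card V) * k := by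
    have h6 : U * D * star U * (U * D * star U) = U * (D * D) * star U := by
      simp only [Matrix.mul_assoc]
      rw [show star U * (U * (D * star U)) = D * star U by
        rw [← Matrix.mul_assoc, hU, Matrix.one_mul]]
    have h7 : Matrix.trace (A * A) = ∑ i, (e i)^2 := by
      conv_lhs => rw [hspec]
      rw [h6, Matrix.trace_mul_comm, ← Matrix.mul_assoc, hU, Matrix.one_mul, hDdef,
        Matrix.diagonal_mul_diagonal, Matrix.trace_diagonal]
      simp [pow_two]
    have h8 : Matrix.trace (A * A) = (Fintype.card V) * k := by
      rw [Matrix.trace]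
      have heq : ∀ i ∈ Finset.univ, (A * A).diag i = (k:ℝ) := by
        intro i _
        rw [Matrix.diag_apply, hAdef, G.adjMatrix_mul_self_apply_self i]
        simp [hsrg.regular i]
      rw [Finset.sum_congr rfl heq]
      simp [mul_comm]
    rw [← h7, h8]
  -- Step 4 : every eigenvalue is `k` or a root of `x ^ 2 + x + (1 - k)`.
  have hp : (A - (k:ℝ) • 1) * (A * A + A + ((1:ℝ) - k) • 1) = 0 := by
    rw [hJ, Matrix.sub_mul, hAJ, Matrix.smul_mul, Matrix.one_mul, sub_self]
  have hroot : ∀ i, e i = k ∨ (e i)^2 + e i + (1 - k) = 0 := by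
    intro i
    set ε : ℝ := e i with hε
    set x : V → ℝ := ⇑(hA.eigenvectorBasis i) with hx
    have hx0 : x ≠ 0 := (WithLp.ofLp_eq_zero 2).ne.2 <| hA.eigenvectorBasis.orthonormal.ne_zero i
    have h1 : A *ᵥ x = ε • x := hA.mulVec_eigenvectorBasis i
    have h2 : (A * A + A + ((1:ℝ) - k) • 1) *ᵥ x = (ε^2 + ε + (1 - k)) • x := by
      rw [Matrix.add_mulVec, Matrix.add_mulVec, ← Matrix.mulVec_mulVec, h1,
        Matrix.mulVec_smul, h1, Matrix.smul_mulVec, Matrix.one_mulVec, smul_smul]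
      rw [pow_two]
      module
    have h3 : ((A - (k:ℝ) • 1) * (A * A + A + ((1:ℝ) - k) • 1)) *ᵥ x
        = ((ε - k) * (ε^2 + ε + (1 - k))) • x := by
      rw [← Matrix.mulVec_mulVec, h2, Matrix.mulVec_smul, Matrix.sub_mulVec, h1,
        Matrix.smul_mulVec, Matrix.one_mulVec, smul_sub, smul_smul, smul_smul, ← sub_smul]
      ring_nf
    rw [hp, Matrix.zero_mulVec] at h3
    have h4 : (ε - k) * (ε^2 + ε + (1 - k)) = 0 := by
      rcases smul_eq_zero.mp h3.symm with h | h
      · exact h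
      · exact absurd h hx0
    rcases mul_eq_zero.mp h4 with h | h
    · left; linarith [sub_eq_zero.mp h]
    · right; exact h
  clear hp hspec hJ hAJ hJJ hU hcn
  -- Step 5 : counting argument.
  set P : Finset V := univ.filter (fun i => e i = k) with hP
  set Q : Finset V := univ.filter (fun i => ¬ (e i = k)) with hQ
  set a := P.card with ha
  set q := Q.card with hq
  have hPQ : a + q = v := by
    rw [ha, hq, hP, hQ, Finset.card_filter_add_card_filter_not, ← hvcard]
    exact Finset.card_univ
  have hsumP : ∑ i ∈ P, e i = (a:ℝ) * k := by
    rw [Finset.sum_congr rfl (fun i hi => (Finset.mem_filter.mp hi).2), Finset.sum_const,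
      nsmul_eq_mul]
  have hsumPsq : ∑ i ∈ P, (e i)^2 = (a:ℝ) * (k:ℝ)^2 := by
    rw [Finset.sum_congr rfl (fun i hi => by rw [(Finset.mem_filter.mp hi).2]),
      Finset.sum_const, nsmul_eq_mul]
  have hsplit1 : ∑ i ∈ P, e i + ∑ i ∈ Q, e i = 0 := by
    rw [← htr1, Finset.sum_filter_add_sum_filter_not]
  have hsplit2 : ∑ i ∈ P, (e i)^2 + ∑ i ∈ Q, (e i)^2 = (v:ℝ) * k := by
    rw [← hvcard, ← htr2, Finset.sum_filter_add_sum_filter_not]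
  have hQquad : ∀ i ∈ Q, (e i)^2 = ((k:ℝ) - 1) - e i := by
    intro i hi
    have := (hroot i).resolve_left (Finset.mem_filter.mp hi).2
    linarith
  have hsumQsq : ∑ i ∈ Q, (e i)^2 = (q:ℝ) * ((k:ℝ) - 1) - ∑ i ∈ Q, e i := by
    rw [Finset.sum_congr rfl hQquad, Finset.sum_sub_distrib, Finset.sum_const, nsmul_eq_mul]
  have hvr : (v:ℝ) = (k:ℝ)^2 + 1 := by exact_mod_cast congrArg (Nat.cast (R := ℝ)) hv
  have hqr : (q:ℝ) = (v:ℝ) - a := by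
    have : (a:ℝ) + q = v := by exact_mod_cast congrArg (Nat.cast (R := ℝ)) hPQ
    linarith
  have haone : a = 1 := by
    have h1 : (a:ℝ)*k + ∑ i ∈ Q, e i = 0 := by rw [← hsumP]; exact hsplit1
    have h2 : (a:ℝ)*(k:ℝ)^2 + ((q:ℝ)*((k:ℝ)-1) - ∑ i ∈ Q, e i) = (v:ℝ)*k := by
      rw [← hsumQsq, ← hsumPsq]; exact hsplit2
    have hne : (k:ℝ)^2 + 1 ≠ 0 := by positivity
    have : (a:ℝ) = 1 := by
      have key : (a:ℝ) * ((k:ℝ)^2 + 1) = 1 * ((k:ℝ)^2 + 1) := by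
        rw [one_mul]
        nlinarith [h1, h2, hqr, hvr]
      exact mul_right_cancel₀ hne key
    exact_mod_cast this
  have hqk : q = k^2 := by omega
  have hsumQ : ∑ i ∈ Q, e i = -(k:ℝ) := by
    rw [hsumP, haone] at hsplit1
    push_cast at hsplit1
    linarith
  -- Step 6 : split the non-`k` eigenvalues into the two quadratic roots.
  set s : ℝ := Real.sqrt (4*(k:ℝ) - 3) with hs
  have hs2 : s^2 = 4*(k:ℝ) - 3 := by
    rw [hs, Real.sq_sqrt]
    have : (2:ℝ) ≤ k := by exact_mod_cast hk2
    linarith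
  set θ : ℝ := (-1 + s)/2 with hθ
  set τ : ℝ := (-1 - s)/2 with hτ
  have hQθτ : ∀ i ∈ Q, e i = θ ∨ e i = τ := by
    intro i hi
    have hquad := (hroot i).resolve_left (Finset.mem_filter.mp hi).2
    have hfact : (e i - θ) * (e i - τ) = 0 := by
      rw [hθ, hτ]
      linear_combination hquad - hs2/4
    rcases mul_eq_zero.mp hfact with h | h
    · left; linarith [sub_eq_zero.mp h]
    · right; linarith [sub_eq_zero.mp h]
  set m := (Q.filter (fun i => e i = θ)).card with hm
  set m' := (Q.filter (fun i => ¬ (e i = θ))).card with hm'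
  have hmm' : m + m' = k^2 := by
    rw [hm, hm', Finset.card_filter_add_card_filter_not, ← hqk]
  have hmr : (m:ℝ) + m' = (k:ℝ)^2 := by exact_mod_cast congrArg (Nat.cast (R := ℝ)) hmm'
  have hsumsplit : (m:ℝ) * θ + (m':ℝ) * τ = -(k:ℝ) := by
    have h1 : ∑ i ∈ Q.filter (fun i => e i = θ), e i = (m:ℝ) * θ := by
      rw [Finset.sum_congr rfl (fun i hi => (Finset.mem_filter.mp hi).2), Finset.sum_const,
        nsmul_eq_mul]
    have h2 : ∑ i ∈ Q.filter (fun i => ¬ (e i = θ)), e i = (m':ℝ) * τ := by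
      rw [Finset.sum_congr rfl (fun i hi => by
        have hiQ := (Finset.mem_filter.mp hi).1
        have hne := (Finset.mem_filter.mp hi).2
        exact (hQθτ i hiQ).resolve_left hne), Finset.sum_const, nsmul_eq_mul]
    rw [← h1, ← h2, Finset.sum_filter_add_sum_filter_not, hsumQ]
  have hkey : s * ((m:ℝ) - m') = (k:ℝ)^2 - 2*k := by
    rw [hθ, hτ] at hsumsplit
    linear_combination 2*hsumsplit + hmr
  clear_value m m'
  clear hsumsplit hQθτ hsumQ hsumQsq hQquad hroot
  -- Step 7 : final arithmetic.
  by_cases hcase : m = m'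
  · left
    rw [hcase, sub_self, mul_zero] at hkey
    have hn : k^2 = 2*k := by
      have : (k:ℝ)^2 = 2*k := by linarith
      exact_mod_cast this
    have hkk : k * k = k * 2 := by rw [← pow_two, hn]; ring
    exact Nat.eq_of_mul_eq_mul_left (by omega) hkk
  · have hreal : (4*(k:ℝ) - 3) * ((m:ℝ) - (m':ℝ))^2 = ((k:ℝ)^2 - 2*k)^2 := by
      linear_combination (s*((m:ℝ)-m') + ((k:ℝ)^2-2*k)) * hkey - ((m:ℝ)-(m':ℝ))^2 * hs2
    have hsq : (4*(k:ℤ) - 3) * ((m:ℤ) - (m':ℤ))^2 = ((k:ℤ)^2 - 2*(k:ℤ))^2 := by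
      exact_mod_cast hreal
    set d : ℤ := (m:ℤ) - m' with hd
    have hd0 : d ≠ 0 := by
      simp only [hd, sub_ne_zero]
      exact_mod_cast hcase
    obtain ⟨t, ht⟩ : d ∣ ((k:ℤ)^2 - 2*k) := by
      rw [← Int.pow_dvd_pow_iff (n := 2) (by norm_num)]
      exact ⟨4*(k:ℤ) - 3, by linarith [hsq]⟩
    have ht2 : t^2 = 4*(k:ℤ) - 3 := by
      have hd2 : d^2 ≠ 0 := pow_ne_zero 2 hd0
      have heq : (4*(k:ℤ) - 3) * d^2 = (t^2) * d^2 := by rw [hsq, ht]; ring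
      have := mul_right_cancel₀ hd2 heq
      linarith
    have htdvd15 : t ∣ 15 := by
      have h15 : (15:ℤ) = t^4 - 2*t^2 - 16*((k:ℤ)^2 - 2*k) := by
        linear_combination (-(t^2+4*(k:ℤ)-5)) * ht2
      have hdd : t ∣ t^4 - 2*t^2 - 16*((k:ℤ)^2 - 2*k) := by
        apply dvd_sub
        · apply dvd_sub
          · exact dvd_pow_self t (by norm_num)
          · exact Dvd.dvd.mul_left (dvd_pow_self t (by norm_num)) 2
        · exact Dvd.dvd.mul_left ⟨d, by rw [ht]; ring⟩ 16
      rwa [← h15] at hdd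
    set T := t.natAbs with hT
    have hT15 : T ∣ 15 := by
      have h := (Int.natAbs_dvd).mpr htdvd15
      exact_mod_cast h
    have hTsq : (T:ℤ)^2 = 4*(k:ℤ) - 3 := by
      rw [hT]
      rw [show ((t.natAbs : ℤ))^2 = |t|^2 by rw [Int.abs_eq_natAbs], sq_abs]
      exact ht2
    have hTle : T ≤ 15 := Nat.le_of_dvd (by norm_num) hT15
    interval_cases T <;> (try norm_num at hT15) <;> (try norm_num at hTsq) <;> omega
end

section
/- Let Γ be a connected graph such that every two vertices at distance 2 have exactly μ > 1 common neighbours and every μ-graph is a clique (Γ is a Terwilliger graph with μ(Γ) > 1). Then for each vertex u, the local graph Γ₁(u) has diameter 2 and every two vertices of Γ₁(u) at distance 2 within Γ₁(u) have exactly μ − 1 common neighbours inside Γ₁(u), all pairwise adjacent; i.e., Γ₁(u) is a Terwilliger graph with μ(Γ₁(u)) = μ − 1. -/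
/-- If `Γ` is a Terwilliger graph with `μ(Γ) = μ > 1` (connected, every two
vertices at distance 2 have exactly `μ` common neighbours which are pairwise
adjacent), then for each vertex `u` the local graph `Γ₁(u)` is a Terwilliger
graph of diameter 2 with `μ(Γ₁(u)) = μ - 1`: any two distinct nonadjacent
neighbours `y, z` of `u` have exactly `μ - 1` common neighbours inside
`Γ₁(u)`, these are pairwise adjacent, and there is at least one (so `y` and
`z` are at distance 2 in `Γ₁(u)`, giving diameter 2). -/
theorem stmt_12 {V : Type*} [Fintype V] [DecidableEq V]
    (G : SimpleGraph V) [DecidableRel G.Adj]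
    (hconn : G.Connected) (mu : ℕ) (hmu : 1 < mu)
    (hamu : ∀ u w : V, u ≠ w → ¬G.Adj u w →
      (G.neighborFinset u ∩ G.neighborFinset w).Nonempty →
      (G.neighborFinset u ∩ G.neighborFinset w).card = mu)
    (hclq : ∀ u w : V, u ≠ w → ¬G.Adj u w →
      ∀ a ∈ G.neighborFinset u ∩ G.neighborFinset w,
        ∀ b ∈ G.neighborFinset u ∩ G.neighborFinset w, a ≠ b → G.Adj a b) :
    ∀ u y z : V, G.Adj u y → G.Adj u z → y ≠ z → ¬G.Adj y z →
      ((G.neighborFinset u ∩ G.neighborFinset y ∩ G.neighborFinset z).Nonempty ∧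
       (G.neighborFinset u ∩ G.neighborFinset y ∩ G.neighborFinset z).card
          = mu - 1 ∧
       ∀ a ∈ G.neighborFinset u ∩ G.neighborFinset y ∩ G.neighborFinset z,
         ∀ b ∈ G.neighborFinset u ∩ G.neighborFinset y ∩ G.neighborFinset z,
           a ≠ b → G.Adj a b) := by
  intro u y z huy huz hyz hnyz
  set S := G.neighborFinset y ∩ G.neighborFinset z with hS
  have huS : u ∈ S := by
    simp [hS, SimpleGraph.mem_neighborFinset, G.adj_symm huy, G.adj_symm huz]
  have hSne : S.Nonempty := ⟨u, huS⟩
  have hcard : S.card = mu := hamu y z hyz hnyz hSne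
  have hsub : G.neighborFinset u ∩ S = S.erase u := by
    ext a
    simp only [Finset.mem_inter, Finset.mem_erase, SimpleGraph.mem_neighborFinset]
    constructor
    · rintro ⟨ha, hb⟩
      exact ⟨fun h => G.loopless.irrefl u (h ▸ ha), hb⟩
    · rintro ⟨hne, ha⟩
      exact ⟨(hclq y z hyz hnyz u huS a ha (Ne.symm hne)), ha⟩
  have key : G.neighborFinset u ∩ G.neighborFinset y ∩ G.neighborFinset z = S.erase u := by
    rw [← hsub, hS, Finset.inter_assoc]
  rw [key]
  have hcarde : (S.erase u).card = mu - 1 := by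
    rw [Finset.card_erase_of_mem huS, hcard]
  refine ⟨?_, hcarde, ?_⟩
  · rw [← Finset.card_pos, hcarde]; omega
  · intro a ha b hb hab
    exact hclq y z hyz hnyz a (Finset.mem_of_mem_erase ha) b (Finset.mem_of_mem_erase hb) hab
end
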